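/- Let G be a graph of girth g ≥ 3. If g is odd then mag^+(G) ≥ g−1, and if g is even then mag^+(G) ≥ g. -/

import Mathlib

namespace MAG

variable {V : Type*}

/-- Directed walk from `x` to `y` whose list of visited vertices is `l`. -/
inductive DWalk (A : V → V → Prop) : V → V → List V → Prop
  | nil (v : V) : DWalk A v v [v]
  | cons {u v w : V} {l : List V} (h : A u v) (p : DWalk A v w l) :
      DWalk A u w (u :: l)

/-- The arc `(a, b)` lies on the walk with vertex list `l`. -/
def ArcOn (a b : V) (l : List V) : Prop :=
  ∃ l₁ l₂ : List V, l = l₁ ++ a :: b :: l₂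

/-- `l` is (the vertex list of) a shortest directed walk from `x` to `y`. -/
def IsShortest (A : V → V → Prop) (x y : V) (l : List V) : Prop :=
  DWalk A x y l ∧ ∀ l' : List V, DWalk A x y l' → l.length ≤ l'.length

/-- `x` and `y` monitor the arc `(a, b)`: the arc lies on every shortest
directed path from `x` to `y` (and such a path exists), or symmetrically
from `y` to `x`. -/
def Monitors (A : V → V → Prop) (x y a b : V) : Prop :=
  ((∃ l, IsShortest A x y l) ∧ ∀ l, IsShortest A x y l → ArcOn a b l) ∨
  ((∃ l, IsShortest A y x l) ∧ ∀ l, IsShortest A y x l → ArcOn a b l)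

/-- A monitoring arc-geodetic set of the digraph `A`. -/
def IsMAGSet (A : V → V → Prop) (M : Set V) : Prop :=
  ∀ a b : V, A a b → ∃ x ∈ M, ∃ y ∈ M, x ≠ y ∧ Monitors A x y a b

/-- The monitoring arc-geodetic number of the digraph `A`. -/
noncomputable def mag (A : V → V → Prop) [Fintype V] : ℕ :=
  sInf {n | ∃ M : Finset V, IsMAGSet A (M : Set V) ∧ M.card = n}

/-- `A` is an orientation of the undirected simple graph `G`. -/
structure IsOrientation (G : SimpleGraph V) (A : V → V → Prop) : Prop where
  adj_iff : ∀ u v : V, G.Adj u v ↔ (A u v ∨ A v u)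
  asymm : ∀ u v : V, A u v → ¬ A v u

/-- The lower monitoring arc-geodetic number of `G`. -/
noncomputable def magMinus (G : SimpleGraph V) [Fintype V] : ℕ :=
  sInf {n | ∃ A : V → V → Prop, IsOrientation G A ∧ mag A = n}

/-- The upper monitoring arc-geodetic number of `G`. -/
noncomputable def magPlus (G : SimpleGraph V) [Fintype V] : ℕ :=
  sSup {n | ∃ A : V → V → Prop, IsOrientation G A ∧ mag A = n}

/-- A source: a vertex with no in-neighbours. -/
def IsSource (A : V → V → Prop) (v : V) : Prop := ∀ w, ¬ A w v

/-- A sink: a vertex with no out-neighbours. -/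
def IsSink (A : V → V → Prop) (v : V) : Prop := ∀ w, ¬ A v w

/-- An oriented graph: no loops and no pair of opposite arcs. -/
def IsOrientedGraph (A : V → V → Prop) : Prop :=
  (∀ v, ¬ A v v) ∧ ∀ u v : V, A u v → ¬ A v u

/-- The underlying undirected graph of `A` is connected. -/
def IsConnectedDigraph (A : V → V → Prop) : Prop :=
  ∀ x y : V, Relation.ReflTransGen (fun a b => A a b ∨ A b a) x y



/-! ### Auxiliary lemmas -/

section Aux

open SimpleGraph

lemma aux_support_eq_map_range {G : SimpleGraph V} {u v : V} (p : G.Walk u v) :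
    p.support = (List.range (p.length + 1)).map p.getVert := by
  induction p with
  | nil => simp [Walk.getVert]
  | cons h q ih =>
      rw [Walk.support_cons, Walk.length_cons, List.range_succ_eq_map, List.map_cons, ih,
        List.map_map]
      rfl

lemma aux_cycle_getVert_inj {G : SimpleGraph V} {a : V} {w : G.Walk a a} (hc : w.IsCycle)
    {i j : ℕ} (hi : i < w.length) (hj : j < w.length) (h : w.getVert i = w.getVert j) :
    i = j := by
  have htail : w.support.tail = (List.range w.length).map (fun k => w.getVert (k + 1)) := by
    rw [aux_support_eq_map_range, List.range_succ_eq_map, List.map_cons, List.tail_cons,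
      List.map_map]
    rfl
  have hnd : (List.range w.length).map (fun k => w.getVert (k + 1)) |>.Nodup := by
    rw [← htail]; exact hc.2
  have hinj : ∀ k₁ ∈ List.range w.length, ∀ k₂ ∈ List.range w.length,
      w.getVert (k₁ + 1) = w.getVert (k₂ + 1) → k₁ = k₂ :=
    List.inj_on_of_nodup_map hnd
  have hpos : 0 < w.length := hi.trans_le' (Nat.zero_le _) |>.trans_le le_rfl
  have hwrap : w.getVert w.length = w.getVert 0 := by
    rw [Walk.getVert_length, Walk.getVert_zero]
  rcases Nat.eq_zero_or_pos i with rfl | hi0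
  · rcases Nat.eq_zero_or_pos j with rfl | hj0
    · rfl
    · exfalso
      obtain ⟨j', rfl⟩ := Nat.exists_eq_add_of_lt hj0
      rw [Nat.zero_add] at *
      have : w.length - 1 = j' := by
        apply hinj _ (by simp; omega) _ (by simpa using by omega)
        rw [show w.length - 1 + 1 = w.length by omega, hwrap, h]
      omega
  · rcases Nat.eq_zero_or_pos j with rfl | hj0
    · exfalso
      obtain ⟨i', rfl⟩ := Nat.exists_eq_add_of_lt hi0
      rw [Nat.zero_add] at *
      have : i' = w.length - 1 := by
        apply hinj _ (by simp; omega) _ (by simp; omega)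
        rw [show w.length - 1 + 1 = w.length by omega, hwrap, ← h]
      omega
    · obtain ⟨i', rfl⟩ := Nat.exists_eq_add_of_lt hi0
      obtain ⟨j', rfl⟩ := Nat.exists_eq_add_of_lt hj0
      rw [Nat.zero_add] at *
      have := hinj i' (by simp; omega) j' (by simp; omega) (by rw [h]; congr 1; omega)
      omega

lemma aux_exists_portion {G : SimpleGraph V} {a : V} (w : G.Walk a a) :
    ∀ d i j, j - i = d → i ≤ j → j ≤ w.length →
    ∃ p : G.Walk (w.getVert i) (w.getVert j),
      p.length = j - i ∧
      p.support = (List.range (j - i + 1)).map (fun k => w.getVert (i + k)) ∧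
      p.edges = (List.range (j - i)).map (fun k => s(w.getVert (i + k), w.getVert (i + k + 1))) := by
  intro d
  induction d with
  | zero =>
      intro i j hd hij hj
      obtain rfl : i = j := by omega
      exact ⟨Walk.nil, by simp, by simp [List.range_succ], by simp⟩
  | succ d ih =>
      intro i j hd hij hj
      have hi : i < w.length := by omega
      obtain ⟨p', hl', hs', he'⟩ := ih (i + 1) j (by omega) (by omega) hj
      refine ⟨Walk.cons (w.adj_getVert_succ hi) p', ?_, ?_, ?_⟩
      · rw [Walk.length_cons, hl']; omega
      · conv_rhs => rw [show j - i + 1 = (j - (i+1) + 1) + 1 by omega, List.range_succ_eq_map,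
          List.map_cons, List.map_map]
        rw [Walk.support_cons, hs']
        refine congrArg₂ _ rfl ?_
        apply List.map_congr_left
        intro k _
        have h1 : i + 1 + k = i + Nat.succ k := by omega
        simp only [Function.comp_apply, h1]
      · conv_rhs => rw [show j - i = (j - (i+1)) + 1 by omega, List.range_succ_eq_map,
          List.map_cons, List.map_map]
        rw [Walk.edges_cons, he']
        refine congrArg₂ _ rfl ?_
        apply List.map_congr_left
        intro k _
        have h1 : i + 1 + k = i + Nat.succ k := by omega
        simp only [Function.comp_apply, h1]

lemma aux_cycle_no_chord {G : SimpleGraph V} {a : V} {g : ℕ} {w : G.Walk a a}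
    (hlen : w.length = g)
    (hgirth : ∀ (b : V) (c : G.Walk b b), c.IsCycle → g ≤ c.length)
    (hinj : ∀ i j, i < g → j < g → w.getVert i = w.getVert j → i = j)
    {i j : ℕ} (hij : i < j) (hj : j < g)
    (hadj : G.Adj (w.getVert i) (w.getVert j)) :
    j = i + 1 ∨ (i = 0 ∧ j = g - 1) := by
  by_contra hcon
  push_neg at hcon
  obtain ⟨h1, h2⟩ := hcon
  have hd2 : 2 ≤ j - i := by omega
  have hdg : j - i ≤ g - 2 := by omega
  obtain ⟨p, hl, hs, he⟩ := aux_exists_portion w (j - i) i j rfl (by omega) (by omega)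
  have hpath : p.IsPath := by
    rw [Walk.isPath_def, hs]
    apply List.Nodup.map_on
    · intro k₁ hk₁ k₂ hk₂ hkk
      simp only [List.mem_range] at hk₁ hk₂
      have := hinj (i + k₁) (i + k₂) (by omega) (by omega) hkk
      omega
    · exact List.nodup_range
  have hedge : s(w.getVert j, w.getVert i) ∉ p.edges := by
    rw [he]
    intro hmem
    obtain ⟨k, hk, hkk⟩ := List.mem_map.mp hmem
    simp only [List.mem_range] at hk
    rw [Sym2.eq_iff] at hkk
    rcases hkk with ⟨hA, hB⟩ | ⟨hA, hB⟩
    · have := hinj j (i + k) hj (by omega) hA.symm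
      omega
    · have := hinj i (i + k) (by omega) (by omega) hA.symm
      have := hinj j (i + k + 1) hj (by omega) hB.symm
      omega
  have hcyc : (Walk.cons hadj.symm p).IsCycle :=
    (SimpleGraph.Walk.cons_isCycle_iff p hadj.symm).mpr ⟨hpath, hedge⟩
  have := hgirth _ _ hcyc
  rw [Walk.length_cons, hl] at this
  omega

/-! DWalk lemmas -/

lemma DWalk.head_eq {A : V → V → Prop} {x y : V} {l : List V} (h : DWalk A x y l) :
    ∃ l', l = x :: l' := by
  cases h with
  | nil => exact ⟨[], rfl⟩
  | cons h p => exact ⟨_, rfl⟩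

lemma DWalk.one_le_length {A : V → V → Prop} {x y : V} {l : List V} (h : DWalk A x y l) :
    1 ≤ l.length := by
  obtain ⟨l', rfl⟩ := h.head_eq
  simp

lemma DWalk.two_le_length {A : V → V → Prop} {x y : V} {l : List V} (h : DWalk A x y l)
    (hne : x ≠ y) : 2 ≤ l.length := by
  cases h with
  | nil => exact absurd rfl hne
  | cons hA p =>
      have := p.one_le_length
      simp only [List.length_cons]
      omega

lemma DWalk.start_of_source {A : V → V → Prop} {u' v' : V} (hu : ∀ z, ¬ A z u') :
    ∀ {x y : V} {l l₁ l₂ : List V}, DWalk A x y l → l = l₁ ++ u' :: v' :: l₂ → x = u' := by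
  intro x y l l₁ l₂ h
  induction h generalizing l₁ with
  | nil v =>
      intro heq
      exfalso
      have := congrArg List.length heq
      simp at this
      omega
  | cons hA p ih =>
      intro heq
      match l₁, heq with
      | [], heq => exact (List.cons_eq_cons.mp heq).1
      | a :: l₁', heq =>
          obtain ⟨rfl, heq'⟩ := List.cons_eq_cons.mp heq
          exact absurd (ih heq' ▸ hA) (hu _)

lemma DWalk.end_of_sink {A : V → V → Prop} {u' v' : V} (hv : ∀ z, ¬ A v' z) :
    ∀ {x y : V} {l l₁ l₂ : List V}, DWalk A x y l → l = l₁ ++ u' :: v' :: l₂ → y = v' := by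
  intro x y l l₁ l₂ h
  induction h generalizing l₁ with
  | nil v =>
      intro heq
      exfalso
      have := congrArg List.length heq
      simp at this
      omega
  | cons hA p ih =>
      intro heq
      match l₁, heq with
      | [], heq =>
          obtain ⟨rfl, heq'⟩ := List.cons_eq_cons.mp heq
          obtain ⟨l', hl'⟩ := p.head_eq
          rw [hl'] at heq'
          obtain ⟨rfl, _⟩ := List.cons_eq_cons.mp heq'
          cases p with
          | nil => rfl
          | cons hA' p' => exact absurd hA' (hv _)
      | a :: l₁', heq =>
          obtain ⟨rfl, heq'⟩ := List.cons_eq_cons.mp heq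
          exact ih heq'

lemma univ_isMAGSet {A : V → V → Prop} (hasymm : ∀ u v, A u v → ¬ A v u) :
    IsMAGSet A (Set.univ : Set V) := by
  intro a b hab
  have hne : a ≠ b := by
    rintro rfl
    exact hasymm a a hab hab
  refine ⟨a, trivial, b, trivial, hne, Or.inl ⟨⟨[a, b], ?_, ?_⟩, ?_⟩⟩
  · exact DWalk.cons hab (DWalk.nil b)
  · intro l' hl'
    have := hl'.two_le_length hne
    simpa using this
  · rintro l ⟨hw, hmin⟩
    have hlen : l.length = 2 := by
      have h2 := hmin [a, b] (DWalk.cons hab (DWalk.nil b))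
      have h1 : 2 ≤ l.length := hw.two_le_length hne
      simp at h2
      omega
    cases hw with
    | nil => simp at hlen
    | cons hA p =>
        cases p with
        | nil => exact ⟨[], [], rfl⟩
        | cons hA' p' =>
            exfalso
            have := p'.one_le_length
            simp only [List.length_cons] at hlen
            omega

lemma mem_of_source_sink {A : V → V → Prop} {M : Set V} (hM : IsMAGSet A M) {s t : V}
    (hs : IsSource A s) (ht : IsSink A t) (hst : A s t) : s ∈ M ∧ t ∈ M := by
  obtain ⟨x, hx, y, hy, hxy, hmon⟩ := hM s t hst
  rcases hmon with ⟨⟨l, hl⟩, hall⟩ | ⟨⟨l, hl⟩, hall⟩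
  · obtain ⟨l₁, l₂, heq⟩ := hall l hl
    have hxs : x = s := hl.1.start_of_source hs heq
    have hyt : y = t := hl.1.end_of_sink ht heq
    exact ⟨hxs ▸ hx, hyt ▸ hy⟩
  · obtain ⟨l₁, l₂, heq⟩ := hall l hl
    have hys : y = s := hl.1.start_of_source hs heq
    have hxt : x = t := hl.1.end_of_sink ht heq
    exact ⟨hys ▸ hy, hxt ▸ hx⟩

/-! The orientation -/

variable (G : SimpleGraph V) (u : ℕ → V) (g : ℕ)

def Sset : Set V := {x | ∃ i, i < g ∧ i % 2 = 1 ∧ x = u i}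

def Tset : Set V := {x | ∃ i, i < g ∧ i % 2 = 0 ∧ (0 < i ∨ g % 2 = 0) ∧ x = u i}

def theA : V → V → Prop := fun x y => G.Adj x y ∧
  (x ∈ Sset u g ∨ y ∈ Tset u g ∨
    (x ∉ Sset u g ∧ x ∉ Tset u g ∧ y ∉ Sset u g ∧ y ∉ Tset u g ∧ WellOrderingRel x y))

variable {G u g}

variable (hSS : ∀ x y, x ∈ Sset u g → y ∈ Sset u g → ¬ G.Adj x y)
variable (hTT : ∀ x y, x ∈ Tset u g → y ∈ Tset u g → ¬ G.Adj x y)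
variable (hST : ∀ x, x ∈ Sset u g → x ∈ Tset u g → False)

include hSS hTT hST in
lemma theA_isOrientation : IsOrientation G (theA G u g) := by
  constructor
  · intro x y
    constructor
    · intro hadj
      by_cases hxS : x ∈ Sset u g
      · exact Or.inl ⟨hadj, Or.inl hxS⟩
      by_cases hyS : y ∈ Sset u g
      · exact Or.inr ⟨hadj.symm, Or.inl hyS⟩
      by_cases hyT : y ∈ Tset u g
      · exact Or.inl ⟨hadj, Or.inr (Or.inl hyT)⟩
      by_cases hxT : x ∈ Tset u g
      · exact Or.inr ⟨hadj.symm, Or.inr (Or.inl hxT)⟩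
      rcases trichotomous_of WellOrderingRel x y with h | h | h
      · exact Or.inl ⟨hadj, Or.inr (Or.inr ⟨hxS, hxT, hyS, hyT, h⟩)⟩
      · exact absurd h hadj.ne
      · exact Or.inr ⟨hadj.symm, Or.inr (Or.inr ⟨hyS, hyT, hxS, hxT, h⟩)⟩
    · rintro (⟨h, -⟩ | ⟨h, -⟩)
      exacts [h, h.symm]
  · rintro x y ⟨hadj, h1⟩ ⟨hadj', h2⟩
    rcases h1 with hxS | hyT | ⟨hxS, hxT, hyS, hyT, hr⟩
    · rcases h2 with hyS | hxT | ⟨_, _, hxS', _, _⟩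
      · exact hSS x y hxS hyS hadj
      · exact hST x hxS hxT
      · exact hxS' hxS
    · rcases h2 with hyS | hxT | ⟨_, hyT', _, _, _⟩
      · exact hST y hyS hyT
      · exact hTT x y hxT hyT hadj
      · exact hyT' hyT
    · rcases h2 with hyS' | hxT' | ⟨_, _, _, _, hr'⟩
      · exact hyS hyS'
      · exact hxT hxT'
      · exact irrefl_of WellOrderingRel x (trans_of WellOrderingRel hr hr')

include hSS hST in
lemma theA_source {x : V} (hx : x ∈ Sset u g) : IsSource (theA G u g) x := by
  rintro z ⟨hadj, h⟩
  rcases h with hzS | hxT | ⟨_, _, hxS', _, _⟩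
  · exact hSS z x hzS hx hadj
  · exact hST x hx hxT
  · exact hxS' hx

include hTT hST in
lemma theA_sink {y : V} (hy : y ∈ Tset u g) : IsSink (theA G u g) y := by
  rintro z ⟨hadj, h⟩
  rcases h with hyS | hzT | ⟨_, hyT', _, _, _⟩
  · exact hST y hyS hy
  · exact hTT y z hy hzT hadj
  · exact hyT' hy

lemma theA_arc {x y : V} (hx : x ∈ Sset u g) (hadj : G.Adj x y) : theA G u g x y :=
  ⟨hadj, Or.inl hx⟩

end Aux

/-- if `G` has girth `g ≥ 3`, then `mag⁺(G) ≥ g - 1` when `g` is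
odd and `mag⁺(G) ≥ g` when `g` is even. -/
theorem magPlus_ge_of_girth {V : Type*} [Fintype V] (G : SimpleGraph V)
    (g : ℕ) (hg3 : 3 ≤ g) (hg : G.girth = g) :
    (Odd g → g - 1 ≤ magPlus G) ∧ (Even g → g ≤ magPlus G) := by
  classical
  have hac : ¬ G.IsAcyclic := by
    intro h
    rw [h.girth_eq_zero] at hg
    omega
  obtain ⟨a, w, hc, hwl⟩ := (SimpleGraph.exists_girth_eq_length).mpr hac
  have hlen : w.length = g := by omega
  have hegirth : (g : ℕ∞) ≤ G.egirth := by
    have htop : G.egirth ≠ ⊤ := fun h => hac (SimpleGraph.egirth_eq_top.mp h)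
    rw [← hg]
    simpa [SimpleGraph.girth] using (ENat.coe_toNat htop).le
  have hgirth_le : ∀ (b : V) (c : G.Walk b b), c.IsCycle → g ≤ c.length := by
    intro b c hcyc
    have := SimpleGraph.le_egirth.mp hegirth b c hcyc
    exact_mod_cast this
  set u : ℕ → V := w.getVert with hu
  have hinj : ∀ i j, i < g → j < g → u i = u j → i = j := by
    intro i j hi hj h
    exact aux_cycle_getVert_inj hc (by omega) (by omega) h
  have hchord : ∀ i j, i < j → j < g → G.Adj (u i) (u j) →
      j = i + 1 ∨ (i = 0 ∧ j = g - 1) := by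
    intro i j hij hj hadj
    exact aux_cycle_no_chord hlen hgirth_le hinj hij hj hadj
  have hadjc : ∀ i, i < g → G.Adj (u i) (u (i + 1)) := by
    intro i hi
    exact w.adj_getVert_succ (by omega)
  have hwrap : u g = u 0 := by
    rw [hu]
    rw [← hlen, SimpleGraph.Walk.getVert_length, SimpleGraph.Walk.getVert_zero]
  -- no edges within S, within T; S and T disjoint
  have hSS : ∀ x y, x ∈ Sset u g → y ∈ Sset u g → ¬ G.Adj x y := by
    rintro x y ⟨i, hi, hio, rfl⟩ ⟨j, hj, hjo, rfl⟩ hadj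
    rcases lt_trichotomy i j with h | h | h
    · rcases hchord i j h hj hadj with h1 | ⟨h1, -⟩ <;> omega
    · exact hadj.ne (by rw [h])
    · rcases hchord j i h hi hadj.symm with h1 | ⟨h1, -⟩ <;> omega
  have hTT : ∀ x y, x ∈ Tset u g → y ∈ Tset u g → ¬ G.Adj x y := by
    rintro x y ⟨i, hi, hie, hic, rfl⟩ ⟨j, hj, hje, hjc, rfl⟩ hadj
    rcases lt_trichotomy i j with h | h | h
    · rcases hchord i j h hj hadj with h1 | ⟨h1, h2⟩ <;> omega
    · exact hadj.ne (by rw [h])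
    · rcases hchord j i h hi hadj.symm with h1 | ⟨h1, h2⟩ <;> omega
  have hST : ∀ x, x ∈ Sset u g → x ∈ Tset u g → False := by
    rintro x ⟨i, hi, hio, rfl⟩ ⟨j, hj, hje, hjc, hx⟩
    have := hinj i j hi hj hx
    omega
  set A : V → V → Prop := theA G u g with hA
  have horient : IsOrientation G A := theA_isOrientation hSS hTT hST
  -- get a minimum MAG set
  have hne : {n | ∃ M : Finset V, IsMAGSet A (M : Set V) ∧ M.card = n}.Nonempty :=
    ⟨(Finset.univ : Finset V).card, Finset.univ,
      by rw [Finset.coe_univ]; exact univ_isMAGSet horient.asymm, rfl⟩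
  obtain ⟨M, hM, hMcard⟩ := Nat.sInf_mem hne
  have hmagA : mag A = M.card := by
    rw [mag, hMcard]
  have hmemM : ∀ i, i < g → (i % 2 = 1 ∨ 2 ≤ i ∨ g % 2 = 0) → u i ∈ (M : Set V) := by
    intro i hi hcond
    by_cases hio : i % 2 = 1
    · have hs : u i ∈ Sset u g := ⟨i, hi, hio, rfl⟩
      by_cases hig : i + 1 < g
      · have ht : u (i + 1) ∈ Tset u g := ⟨i + 1, hig, by omega, by omega, rfl⟩
        have harc : A (u i) (u (i + 1)) := theA_arc hs (hadjc i hi)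
        exact (mem_of_source_sink hM (theA_source hSS hST hs)
          (theA_sink hTT hST ht) harc).1
      · have hieq : i + 1 = g := by omega
        have hgev : g % 2 = 0 := by omega
        have ht : u 0 ∈ Tset u g := ⟨0, by omega, by omega, Or.inr hgev, rfl⟩
        have hadj0 : G.Adj (u i) (u 0) := by
          have := hadjc i hi
          rwa [hieq, hwrap] at this
        have harc : A (u i) (u 0) := theA_arc hs hadj0
        exact (mem_of_source_sink hM (theA_source hSS hST hs)
          (theA_sink hTT hST ht) harc).1
    · have hie : i % 2 = 0 := by omega
      by_cases hi0 : 0 < i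
      · have ht : u i ∈ Tset u g := ⟨i, hi, hie, Or.inl hi0, rfl⟩
        have hs : u (i - 1) ∈ Sset u g := ⟨i - 1, by omega, by omega, rfl⟩
        have hadj1 : G.Adj (u (i - 1)) (u i) := by
          have := hadjc (i - 1) (by omega)
          rwa [show i - 1 + 1 = i by omega] at this
        have harc : A (u (i - 1)) (u i) := theA_arc hs hadj1
        exact (mem_of_source_sink hM (theA_source hSS hST hs)
          (theA_sink hTT hST ht) harc).2
      · have hi0' : i = 0 := by omega
        have hgev : g % 2 = 0 := by omega
        subst hi0'
        have ht : u 0 ∈ Tset u g := ⟨0, by omega, rfl, Or.inr hgev, rfl⟩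
        have hs : u (g - 1) ∈ Sset u g := ⟨g - 1, by omega, by omega, rfl⟩
        have hadjg : G.Adj (u (g - 1)) (u 0) := by
          have := hadjc (g - 1) (by omega)
          rwa [show g - 1 + 1 = g by omega, hwrap] at this
        have harc : A (u (g - 1)) (u 0) := theA_arc hs hadjg
        exact (mem_of_source_sink hM (theA_source hSS hST hs)
          (theA_sink hTT hST ht) harc).2
  -- magPlus machinery
  have hbdd : BddAbove {n | ∃ A' : V → V → Prop, IsOrientation G A' ∧ mag A' = n} := by
    refine ⟨Fintype.card V, ?_⟩
    rintro n ⟨A', hA', rfl⟩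
    apply Nat.sInf_le
    exact ⟨Finset.univ,
      by rw [Finset.coe_univ]; exact univ_isMAGSet hA'.asymm, Finset.card_univ⟩
  have hmem : mag A ∈ {n | ∃ A' : V → V → Prop, IsOrientation G A' ∧ mag A' = n} :=
    ⟨A, horient, rfl⟩
  have hle : mag A ≤ magPlus G := by
    rw [magPlus]
    exact le_csSup hbdd hmem
  constructor
  · intro hodd
    have hodd' : g % 2 = 1 := Nat.odd_iff.mp hodd
    have hsub : (Finset.Ico 1 g).image u ⊆ M := by
      intro x hx
      obtain ⟨i, hi, rfl⟩ := Finset.mem_image.mp hx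
      rw [Finset.mem_Ico] at hi
      exact hmemM i hi.2 (by omega)
    have hcard : ((Finset.Ico 1 g).image u).card = g - 1 := by
      rw [Finset.card_image_of_injOn, Nat.card_Ico]
      intro i hi j hj hij
      rw [Finset.coe_Ico, Set.mem_Ico] at hi hj
      exact hinj i j hi.2 hj.2 hij
    calc g - 1 = ((Finset.Ico 1 g).image u).card := hcard.symm
      _ ≤ M.card := Finset.card_le_card hsub
      _ = mag A := hmagA.symm
      _ ≤ magPlus G := hle
  · intro heven
    have heven' : g % 2 = 0 := Nat.even_iff.mp heven
    have hsub : (Finset.range g).image u ⊆ M := by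
      intro x hx
      obtain ⟨i, hi, rfl⟩ := Finset.mem_image.mp hx
      rw [Finset.mem_range] at hi
      exact hmemM i hi (by omega)
    have hcard : ((Finset.range g).image u).card = g := by
      rw [Finset.card_image_of_injOn, Finset.card_range]
      intro i hi j hj hij
      rw [Finset.coe_range, Set.mem_Iio] at hi hj
      exact hinj i j hi hj hij
    calc g = ((Finset.range g).image u).card := hcard.symm
      _ ≤ M.card := Finset.card_le_card hsub
      _ = mag A := hmagA.symm
      _ ≤ magPlus G := hle


end MAG
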